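/- Let X ⊆ ℝ^n be a nonempty (possibly unbounded) open set, let F : X × ℝ^M → ℝ be jointly continuous, and let f : X → ℝ be continuous with f(x) ∈ int R_x for every x ∈ X. Then for every ε > 0 there exist a subset Γ_ε ⊂ X that is closed and nowhere dense in X, and a smooth function U_ε ∈ C^∞(X ∖ Γ_ε), such that f(x) ≤ T(x,D)U_ε(x) ≤ f(x) + ε for all x ∈ X ∖ Γ_ε. -/

import Mathlib

open Set Topology Filter

/-- The partial derivative of `f` in the `i`-th coordinate direction. -/
noncomputable def pder {n : ℕ} (i : Fin n) (f : (Fin n → ℝ) → ℝ) : (Fin n → ℝ) → ℝ :=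
  fun x => fderiv ℝ f x (Pi.single i 1)

/-- The multi-index partial derivative `D^p f` for a multi-index `p : Fin n → ℕ`. -/
noncomputable def mderiv {n : ℕ} (p : Fin n → ℕ) (f : (Fin n → ℝ) → ℝ) : (Fin n → ℝ) → ℝ :=
  (List.finRange n).foldr (fun i g => (pder i)^[p i] g) f

/-- The nonlinear partial differential operator `T(x,D)` associated to `F`, where
`e : Fin M → (Fin n → ℕ)` enumerates the multi-indices `p` with `|p| ≤ m`:
`T(x,D)U(x) = F(x, (D^p U(x))_{|p| ≤ m})`. -/
noncomputable def TOp {n M : ℕ} (e : Fin M → (Fin n → ℕ))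
    (F : (Fin n → ℝ) → (Fin M → ℝ) → ℝ) (U : (Fin n → ℝ) → ℝ) : (Fin n → ℝ) → ℝ :=
  fun x => F x (fun i => mderiv (e i) U x)


namespace PolyAux

variable {n : ℕ}

/-- scaled monomial centered at `a` -/
noncomputable def Pm (c : ℝ) (a : Fin n → ℝ) (q : Fin n → ℕ) : (Fin n → ℝ) → ℝ :=
  fun y => c * ∏ k, (y k - a k) ^ (q k)

theorem contDiff_Pm (c : ℝ) (a : Fin n → ℝ) (q : Fin n → ℕ) :
    ContDiff ℝ (⊤ : ℕ∞) (Pm c a q) := by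
  apply contDiff_const.mul
  exact contDiff_prod fun k _ =>
    (((contDiff_apply ℝ ℝ k).sub contDiff_const).pow (q k))

theorem hasFDerivAt_Pm (c : ℝ) (a : Fin n → ℝ) (q : Fin n → ℕ) (y : Fin n → ℝ) :
    HasFDerivAt (Pm c a q)
      (c • ∑ k, (∏ j ∈ Finset.univ.erase k, (y j - a j) ^ (q j)) •
        (((q k : ℝ) * (y k - a k) ^ (q k - 1)) •
          (ContinuousLinearMap.proj k : (Fin n → ℝ) →L[ℝ] ℝ))) y := by
  have h : ∀ k ∈ Finset.univ, HasFDerivAt (fun z : Fin n → ℝ => (z k - a k) ^ (q k))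
      (((q k : ℝ) * (y k - a k) ^ (q k - 1)) •
        (ContinuousLinearMap.proj k : (Fin n → ℝ) →L[ℝ] ℝ)) y := by
    intro k _
    have h1 : HasDerivAt (fun t : ℝ => (t - a k) ^ (q k))
        ((q k : ℝ) * (y k - a k) ^ (q k - 1)) (y k) := by
      simpa using ((hasDerivAt_id (y k)).sub_const (a k)).fun_pow (q k)
    have h2 := h1.comp_hasFDerivAt y
      (ContinuousLinearMap.proj k : (Fin n → ℝ) →L[ℝ] ℝ).hasFDerivAt
    exact h2
  exact (HasFDerivAt.finset_prod h).const_mul c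

theorem differentiable_Pm (c : ℝ) (a : Fin n → ℝ) (q : Fin n → ℕ) :
    Differentiable ℝ (Pm c a q) :=
  fun y => (hasFDerivAt_Pm c a q y).differentiableAt

theorem pder_Pm (c : ℝ) (a : Fin n → ℝ) (q : Fin n → ℕ) (i : Fin n) :
    pder i (Pm c a q) = Pm (c * q i) a (Function.update q i (q i - 1)) := by
  funext y
  unfold pder
  rw [(hasFDerivAt_Pm c a q y).fderiv]
  simp only [ContinuousLinearMap.smul_apply, ContinuousLinearMap.sum_apply,
    ContinuousLinearMap.proj_apply, Pi.single_apply, smul_eq_mul]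
  rw [Finset.sum_eq_single i]
  · have hsplit : ∏ k, (y k - a k) ^ (Function.update q i (q i - 1) k)
        = (y i - a i) ^ (q i - 1) * ∏ j ∈ Finset.univ.erase i, (y j - a j) ^ (q j) := by
      rw [← Finset.mul_prod_erase Finset.univ _ (Finset.mem_univ i)]
      rw [Function.update_self]
      congr 1
      apply Finset.prod_congr rfl
      intro j hj
      rw [Function.update_of_ne (Finset.ne_of_mem_erase hj)]
    rw [Pm, hsplit]
    simp only [if_true]
    ring
  · intro b _ hbi
    rw [if_neg hbi]
    ring
  · intro h; exact absurd (Finset.mem_univ i) h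

end PolyAux
namespace PolyAux

variable {n : ℕ}

theorem Pm_congr {c₁ c₂ : ℝ} (a : Fin n → ℝ) {q₁ q₂ : Fin n → ℕ}
    (hc : c₁ = c₂) (hq : q₁ = q₂) : Pm c₁ a q₁ = Pm c₂ a q₂ := by
  subst hc; subst hq; rfl

theorem iter_pder_Pm (c : ℝ) (a : Fin n → ℝ) (q : Fin n → ℕ) (i : Fin n) (k : ℕ) :
    (pder i)^[k] (Pm c a q)
      = Pm (c * ((q i).descFactorial k : ℕ)) a (Function.update q i (q i - k)) := by
  induction k with
  | zero =>
    simp [Function.update_eq_self]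
  | succ k ih =>
    rw [Function.iterate_succ_apply', ih, pder_Pm]
    have h1 : Function.update q i (q i - k) i = q i - k := Function.update_self _ _ _
    rw [h1]
    have h2 : Function.update (Function.update q i (q i - k)) i (q i - k - 1)
        = Function.update q i (q i - (k + 1)) := by
      rw [Function.update_idem, Nat.sub_sub]
    rw [h2]
    refine Pm_congr a ?_ rfl
    rw [Nat.descFactorial_succ]
    push_cast
    ring

theorem foldr_pder_Pm (p : Fin n → ℕ) (a : Fin n → ℝ) :
    ∀ (l : List (Fin n)), l.Nodup → ∀ (c : ℝ) (q : Fin n → ℕ),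
      l.foldr (fun i g => (pder i)^[p i] g) (Pm c a q)
        = Pm (c * (l.map fun i => (((q i).descFactorial (p i) : ℕ) : ℝ)).prod) a
            (fun j => if j ∈ l then q j - p j else q j) := by
  intro l
  induction l with
  | nil =>
    intro _ c q
    simp [Pm]
  | cons i t ih =>
    intro hnd c q
    rw [List.nodup_cons] at hnd
    obtain ⟨hit, hnt⟩ := hnd
    rw [List.foldr_cons, ih hnt, iter_pder_Pm]
    have hqi : (if i ∈ t then q i - p i else q i) = q i := if_neg hit
    rw [hqi]
    refine Pm_congr a ?_ ?_
    · rw [List.map_cons, List.prod_cons]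
      ring
    · funext j
      by_cases hji : j = i
      · subst hji
        rw [Function.update_self]
        simp
      · rw [Function.update_of_ne hji]
        simp only [List.mem_cons]
        by_cases hjt : j ∈ t
        · rw [if_pos hjt, if_pos (Or.inr hjt)]
        · rw [if_neg hjt, if_neg (by tauto)]

theorem mderiv_Pm (p : Fin n → ℕ) (c : ℝ) (a : Fin n → ℝ) (q : Fin n → ℕ) :
    mderiv p (Pm c a q)
      = Pm (c * ∏ i, (((q i).descFactorial (p i) : ℕ) : ℝ)) a (fun j => q j - p j) := by
  rw [mderiv, foldr_pder_Pm p a _ (List.nodup_finRange n)]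
  refine Pm_congr a ?_ ?_
  · rw [Fin.prod_univ_def]
  · funext j
    rw [if_pos (List.mem_finRange j)]

theorem mderiv_Pm_self (p : Fin n → ℕ) (c : ℝ) (a : Fin n → ℝ) (q : Fin n → ℕ) :
    mderiv p (Pm c a q) a = c * (if q = p then ∏ i, (((p i).factorial : ℕ) : ℝ) else 0) := by
  rw [mderiv_Pm, Pm]
  by_cases hqp : q = p
  · subst hqp
    simp [Nat.descFactorial_self, mul_assoc]
  · rw [if_neg hqp]
    have : ∃ i, q i ≠ p i := by
      by_contra h
      push_neg at h
      exact hqp (funext h)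
    obtain ⟨i, hi⟩ := this
    rcases lt_or_gt_of_ne hi with hlt | hgt
    · have hz : (((q i).descFactorial (p i) : ℕ) : ℝ) = 0 := by
        rw [Nat.descFactorial_eq_zero_iff_lt.mpr hlt]; simp
      rw [Finset.prod_eq_zero (Finset.mem_univ i) hz]
      ring
    · have hz : (a i - a i) ^ (q i - p i) = 0 := by
        rw [sub_self]
        exact zero_pow (by omega)
      rw [show (∏ k, (a k - a k) ^ (q k - p k)) = 0 from
        Finset.prod_eq_zero (Finset.mem_univ i) hz]
      ring

end PolyAux
namespace PolyAux

variable {n M : ℕ}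

theorem pder_sum (a : Fin n → ℝ) (i : Fin n) (c : Fin M → ℝ) (q : Fin M → Fin n → ℕ) :
    pder i (fun y => ∑ j, Pm (c j) a (q j) y) = fun y => ∑ j, pder i (Pm (c j) a (q j)) y := by
  funext y
  unfold pder
  rw [fderiv_fun_sum fun j _ => differentiable_Pm (c j) a (q j) y]
  rw [ContinuousLinearMap.sum_apply]

theorem iter_pder_sum (a : Fin n → ℝ) (i : Fin n) (k : ℕ) (c : Fin M → ℝ)
    (q : Fin M → Fin n → ℕ) :
    (pder i)^[k] (fun y => ∑ j, Pm (c j) a (q j) y)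
      = fun y => ∑ j, (pder i)^[k] (Pm (c j) a (q j)) y := by
  induction k with
  | zero => rfl
  | succ k ih =>
    have hcf : ∀ j, (pder i)^[k] (Pm (c j) a (q j))
        = Pm (c j * ((q j i).descFactorial k : ℕ)) a (Function.update (q j) i (q j i - k)) :=
      fun j => iter_pder_Pm (c j) a (q j) i k
    simp only [Function.iterate_succ_apply', ih, hcf]
    rw [pder_sum]

theorem mderiv_sum (a : Fin n → ℝ) (p : Fin n → ℕ) (c : Fin M → ℝ) (q : Fin M → Fin n → ℕ) :
    mderiv p (fun y => ∑ j, Pm (c j) a (q j) y)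
      = fun y => ∑ j, mderiv p (Pm (c j) a (q j)) y := by
  suffices h : ∀ (l : List (Fin n)), l.Nodup → ∀ (c : Fin M → ℝ) (q : Fin M → Fin n → ℕ),
      l.foldr (fun i g => (pder i)^[p i] g) (fun y => ∑ j, Pm (c j) a (q j) y)
        = fun y => ∑ j, l.foldr (fun i g => (pder i)^[p i] g) (Pm (c j) a (q j)) y by
    exact h (List.finRange n) (List.nodup_finRange n) c q
  intro l
  induction l with
  | nil => intro _ c q; rfl
  | cons i t ih =>
    intro hnd c q
    rw [List.nodup_cons] at hnd
    obtain ⟨hit, hnt⟩ := hnd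
    have hcf : ∀ (c' : ℝ) (q' : Fin n → ℕ), t.foldr (fun i g => (pder i)^[p i] g) (Pm c' a q')
        = Pm (c' * (t.map fun i => (((q' i).descFactorial (p i) : ℕ) : ℝ)).prod) a
            (fun j => if j ∈ t then q' j - p j else q' j) :=
      fun c' q' => foldr_pder_Pm p a t hnt c' q'
    simp only [List.foldr_cons, ih hnt, hcf]
    rw [iter_pder_sum]

theorem pder_eqOn {s : Set (Fin n → ℝ)} (hs : IsOpen s) {f g : (Fin n → ℝ) → ℝ}
    (h : Set.EqOn f g s) (i : Fin n) : Set.EqOn (pder i f) (pder i g) s := by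
  intro x hx
  unfold pder
  rw [Filter.EventuallyEq.fderiv_eq (h.eventuallyEq_of_mem (hs.mem_nhds hx))]

theorem iter_pder_eqOn {s : Set (Fin n → ℝ)} (hs : IsOpen s) {f g : (Fin n → ℝ) → ℝ}
    (h : Set.EqOn f g s) (i : Fin n) (k : ℕ) :
    Set.EqOn ((pder i)^[k] f) ((pder i)^[k] g) s := by
  induction k with
  | zero => exact h
  | succ k ih =>
    simp only [Function.iterate_succ_apply']
    exact pder_eqOn hs ih i

theorem mderiv_eqOn {s : Set (Fin n → ℝ)} (hs : IsOpen s) {f g : (Fin n → ℝ) → ℝ}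
    (h : Set.EqOn f g s) (p : Fin n → ℕ) :
    Set.EqOn (mderiv p f) (mderiv p g) s := by
  unfold mderiv
  induction (List.finRange n) with
  | nil => exact h
  | cons i t ih =>
    simp only [List.foldr_cons]
    exact iter_pder_eqOn hs ih i (p i)

end PolyAux
namespace PolyAux

variable {n M : ℕ}

noncomputable def interpPoly (a : Fin n → ℝ) (c : Fin M → ℝ) (e : Fin M → Fin n → ℕ) :
    (Fin n → ℝ) → ℝ := fun y => ∑ j, Pm (c j) a (e j) y

theorem contDiff_interpPoly (a : Fin n → ℝ) (c : Fin M → ℝ) (e : Fin M → Fin n → ℕ) :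
    ContDiff ℝ (⊤ : ℕ∞) (interpPoly a c e) :=
  ContDiff.sum fun j _ => contDiff_Pm (c j) a (e j)

theorem continuous_mderiv_interpPoly (a : Fin n → ℝ) (c : Fin M → ℝ) (e : Fin M → Fin n → ℕ)
    (p : Fin n → ℕ) : Continuous (mderiv p (interpPoly a c e)) := by
  unfold interpPoly
  rw [mderiv_sum a p c e]
  apply continuous_finset_sum
  intro j _
  rw [mderiv_Pm]
  exact (contDiff_Pm _ a _).continuous

theorem mderiv_interpPoly_self (a : Fin n → ℝ) (ξ : Fin M → ℝ) (e : Fin M → Fin n → ℕ)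
    (he : Function.Injective e) (i : Fin M) :
    mderiv (e i) (interpPoly a (fun j => ξ j / ∏ k, (((e j k).factorial : ℕ) : ℝ)) e) a
      = ξ i := by
  unfold interpPoly
  have h1 := congrFun (mderiv_sum a (e i) (fun j => ξ j / ∏ k, (((e j k).factorial : ℕ) : ℝ)) e) a
  rw [h1]
  have h2 : ∀ j : Fin M,
      mderiv (e i) (Pm (ξ j / ∏ k, (((e j k).factorial : ℕ) : ℝ)) a (e j)) a
        = if j = i then ξ j / (∏ k, (((e j k).factorial : ℕ) : ℝ))
            * ∏ k, (((e i k).factorial : ℕ) : ℝ) else 0 := by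
    intro j
    rw [mderiv_Pm_self]
    by_cases hji : j = i
    · subst hji
      rw [if_pos rfl, if_pos rfl]
    · rw [if_neg (fun h => hji (he h)), if_neg hji, mul_zero]
  simp only [h2]
  rw [Finset.sum_ite_eq' Finset.univ i]
  rw [if_pos (Finset.mem_univ i)]
  have hN : (∏ k, (((e i k).factorial : ℕ) : ℝ)) ≠ 0 := by
    apply ne_of_gt
    apply Finset.prod_pos
    intro k _
    exact_mod_cast Nat.factorial_pos _
  field_simp

end PolyAux

open PolyAux

set_option maxHeartbeats 2000000

/-- **Remark 1.2 (upper variant of Proposition 1).** Let `X ⊆ ℝⁿ` be a nonempty open set,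
`F` jointly continuous and `f` continuous with `f(x) ∈ int R_x` for all `x ∈ X`. Then for
every `ε > 0` there exist `Γ_ε ⊆ X`, closed and nowhere dense in `X`, and
`U_ε ∈ C^∞(X \ Γ_ε)` such that `f ≤ T(x,D)U_ε ≤ f + ε` on `X \ Γ_ε`. -/
theorem approximate_solution_off_closed_nowhere_dense_upper
    {n m M : ℕ} (X : Set (Fin n → ℝ)) (hXopen : IsOpen X) (hXne : X.Nonempty)
    (e : Fin M → (Fin n → ℕ)) (he : Function.Injective e)
    (hrange : ∀ p : Fin n → ℕ, (∑ i, p i) ≤ m ↔ p ∈ Set.range e)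
    (F : (Fin n → ℝ) → (Fin M → ℝ) → ℝ)
    (hF : ContinuousOn (fun q : (Fin n → ℝ) × (Fin M → ℝ) => F q.1 q.2) (X ×ˢ Set.univ))
    (f : (Fin n → ℝ) → ℝ) (hf : ContinuousOn f X)
    (hrc : ∀ x ∈ X, f x ∈ interior (Set.range (F x))) :
    ∀ ε > (0 : ℝ), ∃ Γ : Set (Fin n → ℝ), Γ ⊆ X ∧
      IsClosed (Subtype.val ⁻¹' Γ : Set X) ∧
      IsNowhereDense (Subtype.val ⁻¹' Γ : Set X) ∧
      ∃ U : (Fin n → ℝ) → ℝ, ContDiffOn ℝ (⊤ : ℕ∞) U (X \ Γ) ∧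
        ∀ x ∈ X \ Γ, f x ≤ TOp e F U x ∧ TOp e F U x ≤ f x + ε := by
  intro ε hε
  classical
  -- Step 1: choose good constant jets
  have hxi : ∀ x0 : X, ∃ ξ : Fin M → ℝ,
      f ↑x0 < F ↑x0 ξ ∧ F ↑x0 ξ < f ↑x0 + ε := by
    rintro ⟨x0, hx0⟩
    obtain ⟨δ, hδ, hball⟩ := Metric.isOpen_iff.mp isOpen_interior _ (hrc x0 hx0)
    have htmem : f x0 + min δ ε / 2 ∈ interior (Set.range (F x0)) := by
      apply hball
      rw [Metric.mem_ball, Real.dist_eq]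
      have h1 : 0 < min δ ε := lt_min hδ hε
      rw [abs_of_pos (by linarith [abs_nonneg (f x0)] : (0:ℝ) < f x0 + min δ ε / 2 - f x0)]
      · have := min_le_left δ ε
        linarith
    obtain ⟨ξ, hξ⟩ := interior_subset htmem
    refine ⟨ξ, ?_, ?_⟩
    · rw [hξ]
      have h1 : 0 < min δ ε := lt_min hδ hε
      linarith
    · rw [hξ]
      have h2 : min δ ε ≤ ε := min_le_right δ ε
      have h1 : 0 < min δ ε := lt_min hδ hε
      linarith
  choose ξ hξ1 hξ2 using hxi
  -- the interpolating polynomials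
  set c : X → Fin M → ℝ :=
    fun x0 j => ξ x0 j / ∏ k, (((e j k).factorial : ℕ) : ℝ) with hc
  set P : X → (Fin n → ℝ) → ℝ := fun x0 => interpPoly (↑x0) (c x0) e with hP
  have keyP : ∀ x0 : X, ∀ i, mderiv (e i) (P x0) ↑x0 = ξ x0 i := by
    intro x0 i
    exact mderiv_interpPoly_self (↑x0) (ξ x0) e he i
  -- continuity of T applied to the polynomials
  have hTP : ∀ x0 : X, ContinuousOn (TOp e F (P x0)) X := by
    intro x0
    have hd : Continuous (fun y : Fin n → ℝ =>
        ((y, fun i => mderiv (e i) (P x0) y) : (Fin n → ℝ) × (Fin M → ℝ))) := by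
      apply continuous_id.prodMk
      exact continuous_pi fun i => continuous_mderiv_interpPoly _ _ _ _
    have := hF.comp hd.continuousOn
      (fun y hy => (Set.mk_mem_prod hy (Set.mem_univ _)))
    exact this
  -- the basic open sets
  set W : X → Set (Fin n → ℝ) := fun x0 =>
    {y | y ∈ X ∧ f y < TOp e F (P x0) y ∧ TOp e F (P x0) y < f y + ε} with hW
  have hWopen : ∀ x0 : X, IsOpen (W x0) := by
    intro x0
    have h1 : W x0 = (X ∩ (fun y => TOp e F (P x0) y - f y) ⁻¹' Set.Ioi 0)
        ∩ (X ∩ (fun y => f y + ε - TOp e F (P x0) y) ⁻¹' Set.Ioi 0) := by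
      ext y
      simp only [hW, Set.mem_setOf_eq, Set.mem_inter_iff, Set.mem_preimage, Set.mem_Ioi]
      constructor
      · rintro ⟨h1, h2, h3⟩; exact ⟨⟨h1, by linarith⟩, ⟨h1, by linarith⟩⟩
      · rintro ⟨⟨h1, h2⟩, ⟨_, h3⟩⟩; exact ⟨h1, by linarith, by linarith⟩
    rw [h1]
    exact (((hTP x0).sub hf).isOpen_inter_preimage hXopen isOpen_Ioi).inter
      (((hf.add continuousOn_const).sub (hTP x0)).isOpen_inter_preimage hXopen isOpen_Ioi)
  have hWX : ∀ x0 : X, W x0 ⊆ X := fun x0 y hy => hy.1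
  have hmemW : ∀ x0 : X, ↑x0 ∈ W x0 := by
    intro x0
    have hT : TOp e F (P x0) ↑x0 = F ↑x0 (ξ x0) := by
      show F ↑x0 (fun i => mderiv (e i) (P x0) ↑x0) = F ↑x0 (ξ x0)
      congr 1
      funext i
      exact keyP x0 i
    exact ⟨x0.2, by rw [hT]; exact hξ1 x0, by rw [hT]; exact hξ2 x0⟩
  -- countable subcover
  obtain ⟨T, hTc, hTu⟩ := TopologicalSpace.isOpen_iUnion_countable W hWopen
  have hTne : T.Nonempty := by
    obtain ⟨x, hx⟩ := hXne
    have : x ∈ ⋃ i, W i := Set.mem_iUnion.mpr ⟨⟨x, hx⟩, hmemW ⟨x, hx⟩⟩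
    rw [← hTu] at this
    obtain ⟨i, hi, -⟩ := Set.mem_iUnion₂.mp this
    exact ⟨i, hi⟩
  obtain ⟨g, hg⟩ := hTc.exists_eq_range hTne
  -- disjointified open sets
  set V : ℕ → Set (Fin n → ℝ) :=
    fun k => W (g k) \ closure (⋃ j, ⋃ _ : j < k, W (g j)) with hV
  have hVopen : ∀ k, IsOpen (V k) := fun k =>
    (hWopen (g k)).sdiff isClosed_closure
  have hVW : ∀ k, V k ⊆ W (g k) := fun k => Set.diff_subset
  have hVdisj : ∀ j k, j < k → ∀ y, y ∈ V j → y ∈ V k → False := by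
    intro j k hjk y hyj hyk
    exact hyk.2 (subset_closure (Set.mem_iUnion₂.mpr ⟨j, hjk, hVW j hyj⟩))
  have hdense : ∀ k, W (g k) ⊆ closure (⋃ j, V j) := by
    intro k
    induction k using Nat.strong_induction_on with
    | _ k ih =>
      intro y hy
      by_cases hcl : y ∈ closure (⋃ j, ⋃ _ : j < k, W (g j))
      · have hsub : (⋃ j, ⋃ _ : j < k, W (g j)) ⊆ closure (⋃ j, V j) :=
          Set.iUnion₂_subset fun j hj => ih j hj
        exact closure_minimal hsub isClosed_closure hcl
      · exact subset_closure (Set.mem_iUnion.mpr ⟨k, hy, hcl⟩)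
  have hXdense : X ⊆ closure (⋃ j, V j) := by
    intro x hx
    have h1 : x ∈ ⋃ i, W i := Set.mem_iUnion.mpr ⟨⟨x, hx⟩, hmemW ⟨x, hx⟩⟩
    rw [← hTu] at h1
    obtain ⟨i, hiT, hxi⟩ := Set.mem_iUnion₂.mp h1
    rw [hg] at hiT
    obtain ⟨k, rfl⟩ := hiT
    exact hdense k hxi
  have hVXsub : (⋃ j, V j) ⊆ X := Set.iUnion_subset fun k => (hVW k).trans (hWX (g k))
  -- the exceptional set
  refine ⟨X \ ⋃ j, V j, Set.diff_subset, ?_, ?_, ?_⟩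
  · -- closed
    have hSeq : (Subtype.val ⁻¹' (X \ ⋃ j, V j) : Set X)
        = (Subtype.val ⁻¹' (⋃ j, V j))ᶜ := by
      ext x
      simp only [Set.mem_preimage, Set.mem_diff, Set.mem_compl_iff]
      exact ⟨fun h => h.2, fun h => ⟨x.2, h⟩⟩
    rw [hSeq]
    exact (((isOpen_iUnion hVopen).preimage continuous_subtype_val)).isClosed_compl
  · -- nowhere dense
    have hSeq : (Subtype.val ⁻¹' (X \ ⋃ j, V j) : Set X)
        = (Subtype.val ⁻¹' (⋃ j, V j))ᶜ := by
      ext x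
      simp only [Set.mem_preimage, Set.mem_diff, Set.mem_compl_iff]
      exact ⟨fun h => h.2, fun h => ⟨x.2, h⟩⟩
    have hclosed : IsClosed (Subtype.val ⁻¹' (X \ ⋃ j, V j) : Set X) := by
      rw [hSeq]
      exact (((isOpen_iUnion hVopen).preimage continuous_subtype_val)).isClosed_compl
    rw [hclosed.isNowhereDense_iff]
    rw [Set.eq_empty_iff_forall_notMem]
    intro x hx
    have hopen : IsOpen (Subtype.val '' (interior (Subtype.val ⁻¹' (X \ ⋃ j, V j) : Set X))) :=
      hXopen.isOpenMap_subtype_val _ isOpen_interior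
    have hmem : (x : Fin n → ℝ) ∈ Subtype.val '' (interior (Subtype.val ⁻¹' (X \ ⋃ j, V j))) :=
      ⟨x, hx, rfl⟩
    obtain ⟨y, hy1, hy2⟩ := (mem_closure_iff.mp (hXdense x.2)) _ hopen hmem
    obtain ⟨z, hz, rfl⟩ := hy1
    exact (interior_subset hz).2 hy2
  · -- the smooth function
    have hXdiff : X \ (X \ ⋃ j, V j) = ⋃ j, V j := by
      rw [Set.diff_diff_right_self]
      exact Set.inter_eq_self_of_subset_right hVXsub
    refine ⟨fun y => if h : ∃ k, y ∈ V k then P (g (Nat.find h)) y else 0, ?_, ?_⟩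
    · -- smoothness
      rw [hXdiff]
      intro y hy
      obtain ⟨k, hk⟩ := Set.mem_iUnion.mp hy
      have hUeq : Set.EqOn (fun y => if h : ∃ k, y ∈ V k then P (g (Nat.find h)) y else 0)
          (P (g k)) (V k) := by
        intro z hz
        have hex : ∃ k', z ∈ V k' := ⟨k, hz⟩
        have hfind : Nat.find hex = k := by
          rcases lt_trichotomy (Nat.find hex) k with h | h | h
          · exact (hVdisj _ _ h z (Nat.find_spec hex) hz).elim
          · exact h
          · exact (hVdisj _ _ h z hz (Nat.find_spec hex)).elim
        simp only [dif_pos hex, hfind]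
      have hev : (fun y => if h : ∃ k, y ∈ V k then P (g (Nat.find h)) y else 0)
          =ᶠ[nhds y] (P (g k)) := hUeq.eventuallyEq_of_mem ((hVopen k).mem_nhds hk)
      exact ((contDiff_interpPoly _ _ _).contDiffAt.congr_of_eventuallyEq hev).contDiffWithinAt
    · -- bounds
      intro x hx
      rw [hXdiff] at hx
      obtain ⟨k, hk⟩ := Set.mem_iUnion.mp hx
      have hUeq : Set.EqOn (fun y => if h : ∃ k, y ∈ V k then P (g (Nat.find h)) y else 0)
          (P (g k)) (V k) := by
        intro z hz
        have hex : ∃ k', z ∈ V k' := ⟨k, hz⟩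
        have hfind : Nat.find hex = k := by
          rcases lt_trichotomy (Nat.find hex) k with h | h | h
          · exact (hVdisj _ _ h z (Nat.find_spec hex) hz).elim
          · exact h
          · exact (hVdisj _ _ h z hz (Nat.find_spec hex)).elim
        simp only [dif_pos hex, hfind]
      have hT : TOp e F (fun y => if h : ∃ k, y ∈ V k then P (g (Nat.find h)) y else 0) x
          = TOp e F (P (g k)) x := by
        show F x _ = F x _
        congr 1
        funext i
        exact mderiv_eqOn (hVopen k) hUeq (e i) hk
      have hWk := hVW k hk
      exact ⟨by rw [hT]; exact le_of_lt hWk.2.1, by rw [hT]; exact le_of_lt hWk.2.2⟩
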